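/- Let (a,b) ∈ {(2,0), (2,2)} ⊆ (ℤ/4ℤ)², i.e., θ = a + bw ∈ {2, 2+2w}, and R = R_θ, and let n ≥ 1. If C ⊆ Rⁿ is a self-dual linear code (C = C^⊥), then the all-2w vector (2w, 2w, …, 2w) belongs to C. -/

import Mathlib

open Polynomial

/-- The base ring ℤ/4ℤ. -/
abbrev Z4 := ZMod 4

/-- The polynomial X² − (a + bX) over ℤ/4ℤ. -/
noncomputable def wPoly (a b : Z4) : Z4[X] := X ^ 2 - (C b * X + C a)

/-- The ring R_{a+bw} = (ℤ/4ℤ)[X]/(X² − (a + bX)); every element is uniquely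
x₀ + x₁·w with x₀, x₁ ∈ ℤ/4ℤ, and w² = a + b·w. -/
abbrev Rw (a b : Z4) : Type := AdjoinRoot (wPoly a b)

/-- The element w of R_{a+bw}. -/
noncomputable def ww (a b : Z4) : Rw a b := AdjoinRoot.root _

/-- for θ = a + bw ∈ {2, 2+2w}, every self-dual linear code C ⊆ Rⁿ
contains the all-2w vector. -/
lemma hof2 (a b : Z4) : (2 : Rw a b) = AdjoinRoot.of _ (2 : Z4) := (map_ofNat _ 2).symm

lemma two_w_w (a b : Z4) (hab : (a = 2 ∧ b = 0) ∨ (a = 2 ∧ b = 2)) :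
    2 * ww a b * ww a b = 0 := by
  have h := AdjoinRoot.mk_self (f := wPoly a b)
  unfold wPoly at h
  rw [map_sub, sub_eq_zero] at h
  have hroot : ww a b ^ 2 = AdjoinRoot.of _ b * ww a b + AdjoinRoot.of _ a := by
    simp [map_add, map_mul, map_pow, ww, AdjoinRoot.mk_X, AdjoinRoot.mk_C] at h; exact h
  have hkey : 2 * ww a b * ww a b
      = AdjoinRoot.of _ (2*b) * ww a b + AdjoinRoot.of _ (2*a) := by
    rw [show 2 * ww a b * ww a b = 2 * (ww a b ^ 2) by ring, hroot, hof2, mul_add,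
      ← mul_assoc, ← map_mul, ← map_mul]
  rw [hkey]
  rcases hab with ⟨ha, hb⟩ | ⟨ha, hb⟩ <;> subst ha <;> subst hb <;>
    simp [show (2*(0:Z4)) = 0 by decide, show ((2:Z4)*2) = 0 by decide]

lemma two_two (a b : Z4) : (2 : Rw a b) * 2 = 0 := by
  rw [hof2, ← map_mul, show ((2:Z4)*2) = 0 by decide, map_zero]

lemma key (a b : Z4) (hab : (a = 2 ∧ b = 0) ∨ (a = 2 ∧ b = 2)) (x : Rw a b) :
    2 * ww a b * (x * x) = 2 * ww a b * x := by
  have h2w := two_w_w a b hab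
  have h4 := two_two a b
  obtain ⟨p, rfl⟩ := AdjoinRoot.mk_surjective x
  induction p using Polynomial.induction_on with
  | C c =>
      rw [AdjoinRoot.mk_C]
      rw [show 2 * ww a b * (AdjoinRoot.of _ c * AdjoinRoot.of _ c)
          = ww a b * ((2:Rw a b) * (AdjoinRoot.of _ c * AdjoinRoot.of _ c)) by ring,
        show 2 * ww a b * AdjoinRoot.of _ c
          = ww a b * ((2:Rw a b) * AdjoinRoot.of _ c) by ring,
        hof2, ← map_mul, ← map_mul, ← map_mul, show ∀ c : Z4, 2*(c*c) = 2*c by decide]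
  | add p q hp hq =>
      rw [map_add]
      have expand : ∀ u v : Rw a b, 2 * ww a b * ((u+v)*(u+v))
          = 2 * ww a b * (u*u) + 2 * ww a b * (v*v) + (2*2) * (ww a b * (u*v)) := by
        intro u v; ring
      rw [expand, h4, hp, hq]; ring
  | monomial k c ih =>
      have hX : AdjoinRoot.mk (wPoly a b) (C c * X ^ (k+1))
          = AdjoinRoot.mk (wPoly a b) (C c * X ^ k) * ww a b := by
        rw [show (C c * X ^ (k+1) : Z4[X]) = C c * X ^ k * X by ring, map_mul,
          AdjoinRoot.mk_X]; rfl
      set z := AdjoinRoot.mk (wPoly a b) (C c * X ^ k)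
      rw [hX,
        show 2 * ww a b * (z * ww a b * (z * ww a b))
          = (2 * ww a b * ww a b) * (ww a b * (z * z)) by ring,
        show 2 * ww a b * (z * ww a b) = (2 * ww a b * ww a b) * z by ring, h2w,
        zero_mul, zero_mul]

theorem self_dual_contains_all_two_w (a b : Z4) (hab : (a = 2 ∧ b = 0) ∨ (a = 2 ∧ b = 2))
    (n : ℕ) (hn : 1 ≤ n) (C : Submodule (Rw a b) (Fin n → Rw a b))
    (hsd : ∀ x : Fin n → Rw a b, x ∈ C ↔ ∀ y ∈ C, ∑ i, x i * y i = 0) :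
    (fun _ : Fin n => 2 * ww a b) ∈ C := by
  rw [hsd]
  intro y hy
  have hy2 : ∑ i, y i * y i = 0 := (hsd y).mp hy y hy
  calc ∑ i, (fun _ : Fin n => 2 * ww a b) i * y i
      = ∑ i, 2 * ww a b * (y i * y i) := by simp_rw [key a b hab]
    _ = 2 * ww a b * ∑ i, y i * y i := by rw [Finset.mul_sum]
    _ = 0 := by rw [hy2, mul_zero]
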